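/- Let Σ={c,r} with the OPM M given by c⋖c and c≐r (together with the standard relations #⋖c, #⋖r, c⋗#, r⋗#), and let K be the semiring of all finite languages over the two-letter alphabet {a,b}, with union as addition, concatenation as multiplication, ∅ as zero and {ε} as one. Define the series S:(Σ,M)^+→K by S(c^n r)={a^n b a^n} for every n≥1 and S(w)=∅ for all other w. Then S is regular (recognized by some wOPA over (Σ,M) and K) but not strictly regular (not recognized by any rwOPA over (Σ,M) and K). -/

import Mathlib

namespace WOP

/-- Precedence relations: yields precedence, equal in precedence, takes precedence. -/
inductive PrecRel where
  | lt | eq | gt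
deriving DecidableEq

/-- An operator precedence matrix on `Σ ∪ {#}`, where `none` encodes `#`.
It assigns at most one precedence relation to each ordered pair, with
`# ⋖ a` and `a ⋗ #` for every letter `a`. -/
structure OPM (A : Type) where
  rel : Option A → Option A → Option PrecRel
  hash_lt : ∀ a : A, rel none (some a) = some .lt
  hash_gt : ∀ a : A, rel (some a) none = some .gt

variable {A B K : Type}

/-- The letter of `#w#` at position `i` (positions `0` and `> |w|` carry `#`, i.e. `none`). -/
def letterAt (w : List A) (i : ℕ) : Option A :=
  if i = 0 then none else w[i - 1]?

section ChainRel

variable (M : OPM A) (L : ℕ → Option A)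

mutual
  /-- `ChainMid M L k j`: there are `k = k_s < ... < k_m = j` with
  `L k_s ≐ L k_{s+1} ≐ ... ≐ L k_{m-1} ⋗ L k_m` and the gap condition between
  consecutive elements. -/
  inductive ChainMid : ℕ → ℕ → Prop where
    | last {k j : ℕ} : M.rel (L k) (L j) = some .gt → ChainGap k j → ChainMid k j
    | step {k k' j : ℕ} : M.rel (L k) (L k') = some .eq → ChainGap k k' →
        ChainMid k' j → ChainMid k j

  /-- The gap condition between consecutive elements of a chain:
  adjacent positions or a chain. -/
  inductive ChainGap : ℕ → ℕ → Prop where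
    | adj (k : ℕ) : ChainGap k (k + 1)
    | chain {k k' : ℕ} : Chain k k' → ChainGap k k'

  /-- The chain relation `i ⤳ j`: there are positions `i = k_1 < ... < k_m = j` with
  `L k_1 ⋖ L k_2 ≐ ... ≐ L k_{m-1} ⋗ L k_m` such that consecutive `k`'s are adjacent
  or themselves related by `⤳`. -/
  inductive Chain : ℕ → ℕ → Prop where
    | mk {i k j : ℕ} : M.rel (L i) (L k) = some .lt → ChainGap i k → ChainMid k j →
        Chain i j
end

end ChainRel

/-- `(Σ,M)^+`: the set of nonempty words compatible with `M`, i.e. `0 ⤳ |w|+1` in `#w#`. -/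
def OPWords (M : OPM A) : Set (List A) :=
  {w | w ≠ [] ∧ Chain M (letterAt w) 0 (w.length + 1)}

/-- An (unweighted) operator precedence automaton over the alphabet `A`. -/
structure OPA (A : Type) where
  Q : Type
  fin : Fintype Q
  I : Set Q
  F : Set Q
  δpush : Set (Q × A × Q)
  δshift : Set (Q × A × Q)
  δpop : Set (Q × Q × Q)

/-- A weighted operator precedence automaton over the alphabet `A` and weights in `K`. -/
structure WOPA (A K : Type) extends OPA A where
  wtpush : Q × A × Q → K
  wtshift : Q × A × Q → K
  wtpop : Q × Q × Q → K

/-- A configuration: a stack of (symbol, state) pairs, a current state,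
and the remaining input. -/
structure Config (A Q : Type) where
  stack : List (A × Q)
  state : Q
  input : List A

/-- The moves (transitions) an OPA may take. -/
inductive Move (A Q : Type) where
  | push (q : Q) (b : A) (r : Q)
  | shift (q : Q) (b : A) (r : Q)
  | pop (q p r : Q)

/-- The topmost stack symbol (`none` = `#` for the empty stack). -/
def topSym {Q : Type} (st : List (A × Q)) : Option A := st.head?.map Prod.fst

/-- One step of an OPA on an OP alphabet `(A, M)`. -/
inductive Exec (M : OPM A) (T : OPA A) : Config A T.Q → Move A T.Q → Config A T.Q → Prop where
  | push {st : List (A × T.Q)} {q r : T.Q} {b : A} {x : List A} :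
      M.rel (topSym st) (some b) = some .lt → (q, b, r) ∈ T.δpush →
      Exec M T ⟨st, q, b :: x⟩ (.push q b r) ⟨(b, q) :: st, r, x⟩
  | shift {st : List (A × T.Q)} {p q r : T.Q} {a b : A} {x : List A} :
      M.rel (some a) (some b) = some .eq → (q, b, r) ∈ T.δshift →
      Exec M T ⟨(a, p) :: st, q, b :: x⟩ (.shift q b r) ⟨(b, p) :: st, r, x⟩
  | pop {st : List (A × T.Q)} {p q r : T.Q} {a : A} {x : List A} :
      M.rel (some a) x.head? = some .gt → (q, p, r) ∈ T.δpop →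
      Exec M T ⟨(a, p) :: st, q, x⟩ (.pop q p r) ⟨st, r, x⟩

/-- Execution of a sequence of moves. -/
inductive ExecList (M : OPM A) (T : OPA A) :
    Config A T.Q → List (Move A T.Q) → Config A T.Q → Prop where
  | nil (c : Config A T.Q) : ExecList M T c [] c
  | cons {c c' c'' : Config A T.Q} {m : Move A T.Q} {ms : List (Move A T.Q)} :
      Exec M T c m c' → ExecList M T c' ms c'' → ExecList M T c (m :: ms) c''

/-- The weight of a move of a weighted OPA. -/
def moveWt [Semiring K] (W : WOPA A K) : Move A W.Q → K
  | .push q b r => W.wtpush (q, b, r)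
  | .shift q b r => W.wtshift (q, b, r)
  | .pop q p r => W.wtpop (q, p, r)

/-- The accepting runs of an OPA on `w`: an initial state, a sequence of moves from the
initial configuration (empty stack, whole input) to a final configuration
(empty stack, input read), and the final state reached. -/
def AccRuns (M : OPM A) (T : OPA A) (w : List A) : Set (T.Q × List (Move A T.Q) × T.Q) :=
  {ρ | ρ.1 ∈ T.I ∧ ρ.2.2 ∈ T.F ∧ ExecList M T ⟨[], ρ.1, w⟩ ρ.2.1 ⟨[], ρ.2.2, []⟩}

/-- The behavior `⟦W⟧(w)`: the sum over all accepting runs of `W` on `w` of the product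
(in order) of the weights of the moves of the run. -/
noncomputable def behavior [Semiring K] (M : OPM A) (W : WOPA A K) (w : List A) : K :=
  ∑ᶠ ρ ∈ AccRuns M W.toOPA w, (ρ.2.1.map (moveWt W)).prod

/-- A weighted OPA is restricted (an rwOPA) if all pop weights are `1`. -/
def Restricted [Semiring K] (W : WOPA A K) : Prop := ∀ t ∈ W.δpop, W.wtpop t = 1

/-- A series `S : (Σ,M)^+ → K` is regular if it is the behavior of some wOPA. -/
def Regular [Semiring K] (M : OPM A) (S : List A → K) : Prop :=
  ∃ W : WOPA A K, ∀ w ∈ OPWords M, S w = behavior M W w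

/-- A series is strictly regular if it is the behavior of some restricted wOPA. -/
def StrictlyRegular [Semiring K] (M : OPM A) (S : List A → K) : Prop :=
  ∃ W : WOPA A K, Restricted W ∧ ∀ w ∈ OPWords M, S w = behavior M W w

/-- Unweighted acceptance. -/
def Accepts (M : OPM A) (T : OPA A) (w : List A) : Prop :=
  ∃ qI ms qF, qI ∈ T.I ∧ qF ∈ T.F ∧ ExecList M T ⟨[], qI, w⟩ ms ⟨[], qF, []⟩

/-- A language `L ⊆ (Σ,M)^+` is an operator precedence language if it is the set of
compatible words accepted by some OPA. -/
def IsOPL (M : OPM A) (L : Set (List A)) : Prop :=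
  ∃ T : OPA A, L = {w | w ∈ OPWords M ∧ Accepts M T w}

/-- The intersection `S ∩ L` of a series with a language. -/
noncomputable def interSeries [Semiring K] (S : List A → K) (L : Set (List A))
    (w : List A) : K :=
  open Classical in if w ∈ L then S w else 0

/-- `h : Σ → Γ` is OPM-preserving: `a ⊙ b` iff `h(a) ⊙ h(b)` for every relation `⊙`. -/
def OPMPreserving (M : OPM A) (M' : OPM B) (h : A → B) : Prop :=
  ∀ a b : A, M.rel (some a) (some b) = M'.rel (some (h a)) (some (h b))

/-- The image series `h(S)(v) = ∑_{w ∈ (Σ,M)^+, h(w) = v} S(w)`. -/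
noncomputable def mapSeries [Semiring K] (M : OPM A) (h : A → B) (S : List A → K)
    (v : List B) : K :=
  ∑ᶠ w ∈ {w | w ∈ OPWords M ∧ w.map h = v}, S w

/-- The pullback OPM `h⁻¹(M)` along `h : Σ' → Σ`. -/
def pullOPM (M : OPM A) (h : B → A) : OPM B where
  rel o₁ o₂ := M.rel (o₁.map h) (o₂.map h)
  hash_lt b := M.hash_lt (h b)
  hash_gt b := M.hash_gt (h b)

/-- The Nivat class `N(Σ,M,K)`: series obtained from a one-state restricted wOPA over a
pulled-back OP alphabet, intersected with an OPL, followed by the projection. -/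
def NivatClass [Semiring K] (M : OPM A) (S : List A → K) : Prop :=
  ∃ (B : Type) (_ : Fintype B) (h : B → A) (W : WOPA B K) (L : Set (List B)),
    Restricted W ∧ (∃ q₀ : W.Q, ∀ q : W.Q, q = q₀) ∧ IsOPL (pullOPM M h) L ∧
    ∀ v ∈ OPWords M,
      S v = mapSeries (pullOPM M h) h (interSeries (behavior (pullOPM M h) W) L) v

/-- An OPL step function: a finite sum `∑ kᵢ · 1_{Lᵢ}` with the `Lᵢ` OPLs forming a
partition of `(Σ,M)^+`. -/
def IsOPLStep [Semiring K] (M : OPM A) (S : List A → K) : Prop :=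
  ∃ (n : ℕ) (k : Fin n → K) (L : Fin n → Set (List A)),
    (∀ i, IsOPL M (L i)) ∧ (∀ i j, i ≠ j → Disjoint (L i) (L j)) ∧
    (⋃ i, L i) = OPWords M ∧ ∀ i, ∀ w ∈ L i, S w = k i



/-- The subsemiring of finite languages over the two-letter alphabet `Bool`
(`false` plays the role of `a`, `true` the role of `b`). -/
def FinLang : Subsemiring (Language Bool) where
  carrier := {l | (l : Set (List Bool)).Finite}
  zero_mem' := by show Set.Finite _; simpa [Language.zero_def] using Set.finite_empty
  one_mem' := by show Set.Finite _; simpa [Language.one_def] using Set.finite_singleton ([] : List Bool)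
  add_mem' := by
    intro a b ha hb
    show Set.Finite _
    simpa [Language.add_def] using Set.Finite.union ha hb
  mul_mem' := by
    intro a b ha hb
    show Set.Finite _
    simpa [Language.mul_def] using Set.Finite.image2 _ ha hb

/-- The alphabet `Σ = {c, r}`. -/
inductive CR where
  | c | r
deriving DecidableEq

instance instFintypeCR : Fintype CR :=
  ⟨{CR.c, CR.r}, fun x => by cases x <;> simp⟩

/-- The OPM with `c ⋖ c`, `c ≐ r`, the standard `#`-relations, and no other relations. -/
def crOPM : OPM CR where
  rel o₁ o₂ :=
    match o₁, o₂ with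
    | none, none => none
    | none, some _ => some .lt
    | some _, none => some .gt
    | some .c, some .c => some .lt
    | some .c, some .r => some .eq
    | some .r, some _ => none
  hash_lt _ := rfl
  hash_gt a := by cases a <;> rfl

/-- The word `aⁿbaⁿ` over `{a, b}`. -/
def anban (n : ℕ) : List Bool :=
  List.replicate n false ++ true :: List.replicate n false

/-- The series with `S(cⁿr) = {aⁿbaⁿ}` for `n ≥ 1` and `S(w) = ∅` otherwise. -/
def S₁ (w : List CR) : FinLang :=
  if 1 ≤ w.count CR.c ∧ w = List.replicate (w.count CR.c) CR.c ++ [CR.r] then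
    ⟨({anban (w.count CR.c)} : Language Bool), Set.finite_singleton _⟩
  else 0

/-! ### Auxiliary development -/

section Helpers

lemma ExecList.append' {A : Type} {M : OPM A} {T : OPA A} {c c' c'' : Config A T.Q}
    {l1 l2 : List (Move A T.Q)} (h1 : ExecList M T c l1 c') (h2 : ExecList M T c' l2 c'') :
    ExecList M T c (l1 ++ l2) c'' := by
  induction h1 with
  | nil => simpa
  | cons h _ ih => exact .cons h (ih h2)

instance {A Q : Type} [Finite A] [Finite Q] : Finite (Move A Q) := by
  have hinj : Function.Injective (fun m : Move A Q => match m with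
    | .push q b r => (Sum.inl (q,b,r) : (Q×A×Q) ⊕ (Q×A×Q) ⊕ (Q×Q×Q))
    | .shift q b r => Sum.inr (Sum.inl (q,b,r))
    | .pop q p r => Sum.inr (Sum.inr (q,p,r))) := by
    intro m1 m2 h
    cases m1 <;> cases m2 <;> simp_all
  exact Finite.of_injective _ hinj

lemma finite_length_eq (α : Type) [Finite α] (n : ℕ) : {l : List α | l.length = n}.Finite := by
  induction n with
  | zero =>
    have : {l : List α | l.length = 0} = {[]} := by
      ext l; cases l <;> simp
    rw [this]; exact Set.finite_singleton _
  | succ n ih =>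
    have : {l : List α | l.length = n + 1} =
        Set.image2 List.cons Set.univ {l : List α | l.length = n} := by
      ext l; cases l <;> simp
    rw [this]; exact Set.Finite.image2 _ Set.finite_univ ih

lemma mem_finset_sum {ι : Type} (t : Finset ι) (f : ι → FinLang) (x : List Bool) :
    x ∈ ((∑ i ∈ t, f i : FinLang) : Language Bool) ↔ ∃ i ∈ t, x ∈ (f i : Language Bool) := by
  classical
  induction t using Finset.induction with
  | empty =>
    simp only [Finset.sum_empty, Finset.notMem_empty]
    constructor
    · intro h
      have h0 : (((0 : FinLang) : Language Bool)) = 0 := rfl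
      rw [h0] at h
      exact absurd h (Language.notMem_zero x)
    · rintro ⟨i, hi, -⟩; cases hi
  | insert a s hnotmem ih =>
    rw [Finset.sum_insert hnotmem]
    have hco : (((f a + ∑ i ∈ s, f i : FinLang)) : Language Bool)
        = (f a : Language Bool) + ((∑ i ∈ s, f i : FinLang) : Language Bool) := rfl
    rw [hco, Language.add_def]
    constructor
    · intro hx
      rcases (Set.mem_union _ _ _).1 hx with h | h
      · exact ⟨a, Finset.mem_insert_self a s, h⟩
      · obtain ⟨i, hi, hx⟩ := ih.1 h
        exact ⟨i, Finset.mem_insert_of_mem hi, hx⟩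
    · rintro ⟨i, hi, hx⟩
      rcases Finset.mem_insert.1 hi with rfl | hi
      · exact Set.mem_union_left _ hx
      · exact Set.mem_union_right _ (ih.2 ⟨i, hi, hx⟩)

lemma mem_list_prod : ∀ {Ls : List (Language Bool)} {x : List Bool},
    x ∈ Ls.prod ↔ ∃ ws : List (List Bool), List.Forall₂ (· ∈ ·) ws Ls ∧ ws.flatten = x := by
  intro Ls
  induction Ls with
  | nil =>
    intro x
    simp only [List.prod_nil, Language.mem_one, List.forall₂_nil_right_iff]
    constructor
    · rintro rfl; exact ⟨[], rfl, rfl⟩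
    · rintro ⟨ws, rfl, rfl⟩; rfl
  | cons L Ls ih =>
    intro x
    simp only [List.prod_cons, Language.mem_mul]
    constructor
    · rintro ⟨a, ha, b, hb, rfl⟩
      obtain ⟨ws, hws, rfl⟩ := ih.1 hb
      exact ⟨a :: ws, List.Forall₂.cons ha hws, rfl⟩
    · rintro ⟨ws, hws, rfl⟩
      cases hws with
      | cons ha hws =>
        rename_i a ws'
        exact ⟨a, ha, ws'.flatten, ih.2 ⟨ws', hws, rfl⟩, rfl⟩

lemma lang_singleton_mul (u v : List Bool) :
    ({u} : Language Bool) * {v} = ({u ++ v} : Language Bool) := by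
  ext x
  rw [Language.mem_mul]
  constructor
  · rintro ⟨a, ha, b, hb, rfl⟩
    have ha' : a = u := ha; have hb' : b = v := hb; subst ha' hb'; rfl
  · rintro rfl; exact ⟨u, rfl, v, rfl, rfl⟩

lemma lang_singleton_pow (b : Bool) (n : ℕ) :
    ({[b]} : Language Bool) ^ n = ({List.replicate n b} : Language Bool) := by
  induction n with
  | zero => simp [Language.one_def]; rfl
  | succ n ih =>
    rw [pow_succ, ih, lang_singleton_mul]
    congr 1
    rw [← List.replicate_succ' ]

end Helpers

section Cword

/-- The word `cⁿr`. -/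
def cword (n : ℕ) : List CR := List.replicate n CR.c ++ [CR.r]

@[simp] lemma cword_length (n : ℕ) : (cword n).length = n + 1 := by simp [cword]

lemma cword_count (n : ℕ) : (cword n).count CR.c = n := by
  simp [cword, List.count_replicate]

lemma cword_succ (n : ℕ) : cword (n + 1) = CR.c :: cword n := by
  simp [cword, List.replicate_succ]

lemma S₁_cword (n : ℕ) (hn : 1 ≤ n) :
    S₁ (cword n) = ⟨({anban n} : Language Bool), Set.finite_singleton _⟩ := by
  have h : (cword n).count CR.c = n := cword_count n
  unfold S₁
  simp only [h]
  rw [if_pos ⟨hn, rfl⟩]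

lemma letterAt_cword_zero (n : ℕ) : letterAt (cword n) 0 = none := rfl

lemma letterAt_cword_c (n k : ℕ) (h1 : 1 ≤ k) (h2 : k ≤ n) :
    letterAt (cword n) k = some CR.c := by
  rw [letterAt, if_neg (by omega), cword,
    List.getElem?_append_left (by simp; omega), List.getElem?_replicate, if_pos (by omega)]

lemma letterAt_cword_r (n : ℕ) : letterAt (cword n) (n + 1) = some CR.r := by
  rw [letterAt, if_neg (by omega), cword,
    List.getElem?_append_right (by simp)]
  simp

lemma letterAt_cword_last (n : ℕ) : letterAt (cword n) (n + 2) = none := by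
  rw [letterAt, if_neg (by omega), cword,
    List.getElem?_append_right (by simp)]
  simp

lemma cword_mem_OPWords (n : ℕ) (hn : 1 ≤ n) : cword n ∈ OPWords crOPM := by
  constructor
  · simp [cword]
  · rw [cword_length]
    set L := letterAt (cword n) with hL
    have hmid : ∀ t k, 1 ≤ k → k + t = n → ChainMid crOPM L k (n + 1 + 1) := by
      intro t
      induction t with
      | zero =>
        intro k hk1 hkn
        have hk : k = n := by omega
        subst hk
        refine ChainMid.step ?_ (ChainGap.adj k) (ChainMid.last ?_ (ChainGap.adj (k+1)))
        · rw [hL, letterAt_cword_c k k hk1 le_rfl, letterAt_cword_r k]; rfl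
        · rw [hL, letterAt_cword_r k, letterAt_cword_last k]; rfl
      | succ t ih =>
        intro k hk1 hkn
        refine ChainMid.last ?_ (ChainGap.chain (Chain.mk ?_ (ChainGap.adj k) (ih (k+1) (by omega) (by omega))))
        · rw [hL, letterAt_cword_c n k hk1 (by omega), letterAt_cword_last n]; rfl
        · rw [hL, letterAt_cword_c n k hk1 (by omega), letterAt_cword_c n (k+1) (by omega) (by omega)]; rfl
    refine Chain.mk ?_ (ChainGap.adj 0) (hmid (n - 1) 1 le_rfl (by omega))
    rw [hL, letterAt_cword_zero, letterAt_cword_c n 1 le_rfl hn]; rfl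

end Cword

section General

variable (T : OPA CR)

/-- The push moves along a state sequence. -/
def pushMoves (qs : ℕ → T.Q) (j : ℕ) : List (Move CR T.Q) :=
  (List.range j).map fun k => Move.push (qs k) CR.c (qs (k+1))

/-- The stack after `j` pushes of `c`. -/
def pushStk (qs : ℕ → T.Q) (j : ℕ) : List (CR × T.Q) :=
  (List.range j).reverse.map fun i => (CR.c, qs i)

@[simp] lemma pushMoves_length (qs : ℕ → T.Q) (j : ℕ) : (pushMoves T qs j).length = j := by
  simp [pushMoves]

@[simp] lemma pushStk_length (qs : ℕ → T.Q) (j : ℕ) : (pushStk T qs j).length = j := by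
  simp [pushStk]

lemma pushStk_succ (qs : ℕ → T.Q) (j : ℕ) :
    pushStk T qs (j+1) = (CR.c, qs j) :: pushStk T qs j := by
  simp [pushStk, List.range_succ]

lemma pushMoves_snoc (qs : ℕ → T.Q) (j : ℕ) :
    pushMoves T qs (j+1) = pushMoves T qs j ++ [Move.push (qs j) CR.c (qs (j+1))] := by
  simp [pushMoves, List.range_succ]

lemma pushMoves_succ_head (qs : ℕ → T.Q) (j : ℕ) :
    pushMoves T qs (j+1)
      = Move.push (qs 0) CR.c (qs 1) :: pushMoves T (fun k => qs (k+1)) j := by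
  simp only [pushMoves, List.range_succ_eq_map, List.map_cons, List.map_map]
  rfl

lemma pushStk_shift (qs : ℕ → T.Q) (j : ℕ) :
    pushStk T qs (j+1) = pushStk T (fun k => qs (k+1)) j ++ [(CR.c, qs 0)] := by
  simp only [pushStk, List.range_succ_eq_map, List.reverse_cons, List.map_append,
    List.map_cons, List.map_map, List.map_reverse]
  rfl

lemma pushStk_get (qs : ℕ → T.Q) (j k : ℕ) (hk' : k < (pushStk T qs j).length) :
    (pushStk T qs j).get ⟨k, hk'⟩ = (CR.c, qs (j - 1 - k)) := by
  have hk : k < j := by simpa using hk'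
  simp [pushStk, List.get_eq_getElem, List.getElem_reverse, List.getElem_map]

lemma push_phase (qs : ℕ → T.Q) (n : ℕ)
    (hp : ∀ k < n, (qs k, CR.c, qs (k+1)) ∈ T.δpush) :
    ∀ j, j ≤ n → ExecList crOPM T ⟨[], qs 0, cword n⟩ (pushMoves T qs j)
      ⟨pushStk T qs j, qs j, List.replicate (n - j) CR.c ++ [CR.r]⟩ := by
  intro j
  induction j with
  | zero =>
    intro _
    simpa [pushMoves, pushStk, cword] using ExecList.nil (T := T) ⟨[], qs 0, cword n⟩
  | succ j ih =>
    intro hj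
    have h1 := ih (by omega)
    obtain ⟨t, ht⟩ : ∃ t, n - j = t + 1 := ⟨n - j - 1, by omega⟩
    have hrel : crOPM.rel (topSym (pushStk T qs j)) (some CR.c) = some PrecRel.lt := by
      cases j with
      | zero => rfl
      | succ i => rw [pushStk_succ]; rfl
    have hstep : Exec crOPM T ⟨pushStk T qs j, qs j, List.replicate (n-j) CR.c ++ [CR.r]⟩
        (Move.push (qs j) CR.c (qs (j+1)))
        ⟨(CR.c, qs j) :: pushStk T qs j, qs (j+1), List.replicate t CR.c ++ [CR.r]⟩ := by
      rw [ht, List.replicate_succ, List.cons_append]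
      exact Exec.push hrel (hp j (by omega))
    have h2 := ExecList.append' h1 (ExecList.cons hstep (ExecList.nil _))
    rw [← pushMoves_snoc, ← pushStk_succ] at h2
    have hcount : n - (j+1) = t := by omega
    rw [hcount]
    exact h2

lemma pop_phase : ∀ (st : List (CR × T.Q)) (t : ℕ → T.Q),
    (∀ k, (hk : k < st.length) → (t k, (st.get ⟨k, hk⟩).2, t (k+1)) ∈ T.δpop) →
    ∃ pos : List (Move CR T.Q),
      (∀ m ∈ pos, ∃ x y z, m = Move.pop x y z ∧ (x,y,z) ∈ T.δpop) ∧
      ExecList crOPM T ⟨st, t 0, []⟩ pos ⟨[], t st.length, []⟩ := by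
  intro st
  induction st with
  | nil => exact fun t _ => ⟨[], by simp, ExecList.nil _⟩
  | cons ap st ih =>
    intro t hpop
    obtain ⟨a, p⟩ := ap
    obtain ⟨pos, hposs, hexec⟩ := ih (fun k => t (k+1))
      (fun k hk => hpop (k+1) (by simpa using Nat.succ_lt_succ hk))
    refine ⟨Move.pop (t 0) p (t 1) :: pos, ?_, ?_⟩
    · intro m hm
      rcases List.mem_cons.1 hm with rfl | hm
      · exact ⟨t 0, p, t 1, rfl, hpop 0 (by simp)⟩
      · exact hposs m hm
    · refine ExecList.cons (Exec.pop (x := []) (crOPM.hash_gt a) (hpop 0 (by simp))) ?_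
      simpa using hexec

lemma construct (n : ℕ) (hn : 1 ≤ n) (qs ss : ℕ → T.Q)
    (hp : ∀ k < n, (qs k, CR.c, qs (k+1)) ∈ T.δpush)
    (hsh : (qs n, CR.r, ss 0) ∈ T.δshift)
    (hq : ∀ k < n, (ss k, qs (n-1-k), ss (k+1)) ∈ T.δpop) :
    ∃ pos : List (Move CR T.Q),
      (∀ m ∈ pos, ∃ x y z, m = Move.pop x y z ∧ (x,y,z) ∈ T.δpop) ∧
      ExecList crOPM T ⟨[], qs 0, cword n⟩
        (pushMoves T qs n ++ Move.shift (qs n) CR.r (ss 0) :: pos) ⟨[], ss n, []⟩ := by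
  obtain ⟨t0, rfl⟩ : ∃ t0, n = t0 + 1 := ⟨n - 1, by omega⟩
  have h1 := push_phase T qs (t0+1) hp (t0+1) le_rfl
  rw [Nat.sub_self] at h1
  simp only [List.replicate_zero, List.nil_append] at h1
  rw [pushStk_succ] at h1
  have hstep : Exec crOPM T ⟨(CR.c, qs t0) :: pushStk T qs t0, qs (t0+1), [CR.r]⟩
      (Move.shift (qs (t0+1)) CR.r (ss 0))
      ⟨(CR.r, qs t0) :: pushStk T qs t0, ss 0, []⟩ :=
    Exec.shift rfl hsh
  have hpops : ∀ k, (hk : k < ((CR.r, qs t0) :: pushStk T qs t0).length) →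
      (ss k, (((CR.r, qs t0) :: pushStk T qs t0).get ⟨k, hk⟩).2, ss (k+1)) ∈ T.δpop := by
    intro k hk
    have hk2 : k < t0 + 1 := by simpa using hk
    cases k with
    | zero =>
      have := hq 0 (by omega)
      simpa using this
    | succ k' =>
      have hget : (((CR.r, qs t0) :: pushStk T qs t0).get ⟨k'+1, hk⟩)
          = (pushStk T qs t0).get ⟨k', by simpa using hk2⟩ := rfl
      rw [hget, pushStk_get]
      have := hq (k'+1) (by omega)
      have harith : t0 + 1 - 1 - (k'+1) = t0 - 1 - k' := by omega
      rwa [harith] at this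
  obtain ⟨pos, hposs, hexec⟩ := pop_phase T ((CR.r, qs t0) :: pushStk T qs t0) ss hpops
  have hlen : ((CR.r, qs t0) :: pushStk T qs t0).length = t0 + 1 := by simp
  rw [hlen] at hexec
  exact ⟨pos, hposs, ExecList.append' h1 (ExecList.cons hstep hexec)⟩

lemma dpush : ∀ (j : ℕ) (ms : List (Move CR T.Q)) (q : T.Q) (st : List (CR × T.Q)) (f : T.Q),
    ExecList crOPM T ⟨st, q, List.replicate j CR.c ++ [CR.r]⟩ ms ⟨[], f, []⟩ →
    topSym st ≠ some CR.r →
    ∃ (qs : ℕ → T.Q) (ms' : List (Move CR T.Q)),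
      qs 0 = q ∧ (∀ k < j, (qs k, CR.c, qs (k+1)) ∈ T.δpush) ∧
      ms = pushMoves T qs j ++ ms' ∧
      ExecList crOPM T ⟨pushStk T qs j ++ st, qs j, [CR.r]⟩ ms' ⟨[], f, []⟩ := by
  intro j
  induction j with
  | zero =>
    intro ms q st f h _
    refine ⟨fun _ => q, ms, rfl, by intro k hk; exact absurd hk (Nat.not_lt_zero k),
      by simp [pushMoves], ?_⟩
    simpa [pushStk] using h
  | succ j ih =>
    intro ms q st f h hst
    rw [List.replicate_succ, List.cons_append] at h
    cases h with
    | cons hexec hrest =>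
      cases hexec with
      | push hrel hδ =>
        obtain ⟨qs', ms', hq0, hpush, hmseq, hexec'⟩ :=
          ih _ _ _ _ hrest (by simp [topSym])
        refine ⟨fun k => Nat.casesOn k q qs', ms', rfl, ?_, ?_, ?_⟩
        · intro k hk
          cases k with
          | zero => simpa [hq0] using hδ
          | succ k' => exact hpush k' (by omega)
        · rw [hmseq, pushMoves_succ_head]
          show _ :: (pushMoves T qs' j ++ ms')
            = Move.push q CR.c (qs' 0) :: (pushMoves T qs' j ++ ms')
          rw [hq0]
        · rw [pushStk_shift, List.append_assoc]
          exact hexec'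
      | shift hrel hδ =>
        exfalso
        rename_i a
        cases a
        · exact absurd hrel (by decide)
        · exact hst rfl
      | pop hrel hδ =>
        exfalso
        rename_i a
        cases a
        · rw [List.head?_cons] at hrel
          exact absurd hrel (by decide)
        · exact hst rfl

lemma dshift (p : T.Q) (st : List (CR × T.Q)) (q f : T.Q) (ms : List (Move CR T.Q))
    (h : ExecList crOPM T ⟨(CR.c, p) :: st, q, [CR.r]⟩ ms ⟨[], f, []⟩) :
    ∃ s0 ms', (q, CR.r, s0) ∈ T.δshift ∧ ms = Move.shift q CR.r s0 :: ms' ∧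
      ExecList crOPM T ⟨(CR.r, p) :: st, s0, []⟩ ms' ⟨[], f, []⟩ := by
  cases h with
  | cons hexec hrest =>
    cases hexec with
    | push hrel hδ =>
      exfalso
      rw [show topSym ((CR.c, p) :: st) = some CR.c from rfl] at hrel
      exact absurd hrel (by decide)
    | shift hrel hδ => exact ⟨_, _, hδ, rfl, hrest⟩
    | pop hrel hδ =>
      exfalso
      rw [List.head?_cons] at hrel
      exact absurd hrel (by decide)

lemma dpop : ∀ (ms : List (Move CR T.Q)) (st : List (CR × T.Q)) (s f : T.Q),
    ExecList crOPM T ⟨st, s, []⟩ ms ⟨[], f, []⟩ →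
    ∃ ss : ℕ → T.Q, ss 0 = s ∧ ss st.length = f ∧ ms.length = st.length ∧
      (∀ k, (hk : k < st.length) → (ss k, (st.get ⟨k, hk⟩).2, ss (k+1)) ∈ T.δpop) ∧
      (∀ m ∈ ms, ∃ x y z, m = Move.pop x y z ∧ (x,y,z) ∈ T.δpop) := by
  intro ms
  induction ms with
  | nil =>
    intro st s f h
    cases h
    exact ⟨fun _ => s, rfl, rfl, rfl, by simp, by simp⟩
  | cons m tail ih =>
    intro st s f h
    cases h with
    | cons hexec hrest =>
      cases hexec with
      | pop hrel hδ =>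
        rename_i p r' a
        obtain ⟨ss', h0, hlast, hlen, hpop, hmoves⟩ := ih _ r' f hrest
        refine ⟨fun k => Nat.casesOn k s ss', rfl, ?_, ?_, ?_, ?_⟩
        · simpa using hlast
        · simpa using hlen
        · intro k hk
          cases k with
          | zero => simpa [h0] using hδ
          | succ k' => exact hpop k' (by simpa using hk)
        · intro m hm
          rcases List.mem_cons.1 hm with rfl | hm
          · exact ⟨s, p, r', rfl, hδ⟩
          · exact hmoves m hm

lemma decomp (n : ℕ) (hn : 1 ≤ n) {q f : T.Q} {ms : List (Move CR T.Q)}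
    (h : ExecList crOPM T ⟨[], q, cword n⟩ ms ⟨[], f, []⟩) :
    ∃ (qs ss : ℕ → T.Q) (pos : List (Move CR T.Q)),
      qs 0 = q ∧ ss n = f ∧
      (∀ k < n, (qs k, CR.c, qs (k+1)) ∈ T.δpush) ∧
      (qs n, CR.r, ss 0) ∈ T.δshift ∧
      (∀ k < n, (ss k, qs (n-1-k), ss (k+1)) ∈ T.δpop) ∧
      (∀ m ∈ pos, ∃ x y z, m = Move.pop x y z ∧ (x,y,z) ∈ T.δpop) ∧
      ms = pushMoves T qs n ++ Move.shift (qs n) CR.r (ss 0) :: pos ∧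
      ms.length = 2 * n + 1 := by
  obtain ⟨t0, rfl⟩ : ∃ t0, n = t0 + 1 := ⟨n - 1, by omega⟩
  have h' : ExecList crOPM T ⟨[], q, List.replicate (t0+1) CR.c ++ [CR.r]⟩ ms ⟨[], f, []⟩ := h
  obtain ⟨qs, ms1, hq0, hpush, hmseq, hex1⟩ :=
    dpush T (t0+1) ms q [] f h' (by simp [topSym])
  rw [List.append_nil, pushStk_succ] at hex1
  obtain ⟨s0, ms2, hδsh, hms1eq, hex2⟩ := dshift T (qs t0) (pushStk T qs t0) (qs (t0+1)) f ms1 hex1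
  obtain ⟨ss, hss0, hsslast, hms2len, hpops, hms2pop⟩ := dpop T ms2 _ s0 f hex2
  have hstlen : ((CR.r, qs t0) :: pushStk T qs t0).length = t0 + 1 := by simp
  rw [hstlen] at hsslast hms2len
  refine ⟨qs, ss, ms2, hq0, hsslast, hpush, by rwa [hss0], ?_, hms2pop, ?_, ?_⟩
  · intro k hk
    cases k with
    | zero =>
      have := hpops 0 (by simp)
      simpa using this
    | succ k' =>
      have hk2 : k' + 1 < t0 + 1 := hk
      have := hpops (k'+1) (by simpa using hk2)
      have hget : (((CR.r, qs t0) :: pushStk T qs t0).get ⟨k'+1, by simpa using hk2⟩)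
          = (pushStk T qs t0).get ⟨k', by simpa using hk2⟩ := rfl
      rw [hget, pushStk_get] at this
      have harith : t0 - 1 - k' = t0 + 1 - 1 - (k'+1) := by omega
      rwa [harith] at this
  · rw [hmseq, hms1eq, hss0]
  · rw [hmseq, hms1eq]
    simp [hms2len]
    omega

lemma accRuns_finite (n : ℕ) (hn : 1 ≤ n) : (AccRuns crOPM T (cword n)).Finite := by
  haveI := T.fin
  have hsub : AccRuns crOPM T (cword n) ⊆
      (Set.univ : Set T.Q) ×ˢ
        (({l : List (Move CR T.Q) | l.length = 2*n+1} : Set _) ×ˢ (Set.univ : Set T.Q)) := by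
    rintro ⟨qI, ms, qF⟩ ⟨hI, hF, hex⟩
    obtain ⟨qs, ss, pos, -, -, -, -, -, -, -, hlen⟩ := decomp T n hn hex
    exact ⟨Set.mem_univ _, hlen, Set.mem_univ _⟩
  exact Set.Finite.subset
    (Set.Finite.prod Set.finite_univ
      (Set.Finite.prod (finite_length_eq _ _) Set.finite_univ)) hsub

end General

lemma mem_behavior_iff (W : WOPA CR FinLang) (n : ℕ) (hn : 1 ≤ n) (x : List Bool) :
    x ∈ ((behavior crOPM W (cword n) : FinLang) : Language Bool) ↔
      ∃ ρ ∈ AccRuns crOPM W.toOPA (cword n),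
        x ∈ (((ρ.2.1.map (moveWt W)).prod : FinLang) : Language Bool) := by
  classical
  have hfin : (AccRuns crOPM W.toOPA (cword n) ∩
      Function.support (fun ρ : W.Q × List (Move CR W.Q) × W.Q =>
        ((ρ.2.1.map (moveWt W)).prod : FinLang))).Finite :=
    (accRuns_finite W.toOPA n hn).inter_of_left _
  rw [behavior, finsum_mem_eq_sum _ hfin, mem_finset_sum]
  constructor
  · rintro ⟨ρ, hρ, hx⟩
    rw [Set.Finite.mem_toFinset] at hρ
    exact ⟨ρ, hρ.1, hx⟩
  · rintro ⟨ρ, hρ, hx⟩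
    refine ⟨ρ, ?_, hx⟩
    rw [Set.Finite.mem_toFinset]
    refine ⟨hρ, ?_⟩
    intro h0
    have h0' : ((ρ.2.1.map (moveWt W)).prod : FinLang) = 0 := h0
    rw [h0'] at hx
    exact Language.notMem_zero x hx

section PartA

/-- The weight `{a}`. -/
def aL : FinLang := ⟨({[false]} : Language Bool), Set.finite_singleton _⟩
/-- The weight `{b}`. -/
def bL : FinLang := ⟨({[true]} : Language Bool), Set.finite_singleton _⟩

/-- The OPA recognizing `cⁿr`. -/
@[reducible] def T1 : OPA CR where
  Q := Bool
  fin := inferInstance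
  I := {false}
  F := {true}
  δpush := {(false, CR.c, false)}
  δshift := {(false, CR.r, true)}
  δpop := {(true, false, true)}

/-- The wOPA recognizing `S₁`. -/
def W1 : WOPA CR FinLang :=
  { T1 with wtpush := fun _ => aL, wtshift := fun _ => bL, wtpop := fun _ => aL }

lemma W1_pop : ∀ (ms : List (Move CR Bool)) (st : List (CR × Bool)) (x : List CR),
    ExecList crOPM T1 ⟨st, true, x⟩ ms ⟨[], true, []⟩ →
    (∀ p ∈ st, p.2 = false) →
    x = [] ∧ ms = List.replicate st.length (Move.pop true false true) := by
  intro ms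
  induction ms with
  | nil =>
    intro st x h hst
    cases h
    exact ⟨rfl, rfl⟩
  | cons m tail ih =>
    intro st x h hst
    cases h with
    | cons hexec hrest =>
      cases hexec with
      | push hrel hδ => exact absurd hδ (by simp [T1])
      | shift hrel hδ => exact absurd hδ (by simp [T1])
      | pop hrel hδ =>
        rename_i p r' a
        have hx : x = [] := by
          cases x with
          | nil => rfl
          | cons y ys =>
            rw [List.head?_cons] at hrel
            cases a <;> cases y <;> exact absurd hrel (by decide)
        subst hx
        obtain ⟨hp, hr⟩ : p = false ∧ r' = true := by simpa [T1] using hδ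
        subst hp; subst hr
        obtain ⟨-, htail⟩ := ih _ [] hrest (fun pp hpp => hst pp (List.mem_cons_of_mem _ hpp))
        refine ⟨rfl, ?_⟩
        simp [htail, List.replicate_succ]

lemma W1_run : ∀ (ms : List (Move CR Bool)) (w : List CR) (st : List (CR × Bool)),
    ExecList crOPM T1 ⟨st, false, w⟩ ms ⟨[], true, []⟩ →
    (∀ p ∈ st, p = (CR.c, false)) →
    ∃ k, w = cword k ∧ 1 ≤ k + st.length ∧
      ms = List.replicate k (Move.push false CR.c false) ++
        Move.shift false CR.r true :: List.replicate (k + st.length) (Move.pop true false true) := by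
  intro ms
  induction ms with
  | nil => intro w st h hst; cases h
  | cons m tail ih =>
    intro w st h hst
    cases h with
    | cons hexec hrest =>
      cases hexec with
      | push hrel hδ =>
        rename_i r' b x
        obtain ⟨hb, hr⟩ : b = CR.c ∧ r' = false := by simpa [T1] using hδ
        subst hb; subst hr
        obtain ⟨k, hx, hk1, htail⟩ := ih x ((CR.c, false) :: st) hrest
          (by
            intro p hp
            rcases List.mem_cons.1 hp with rfl | hp
            · rfl
            · exact hst p hp)
        simp only [List.length_cons] at htail
        refine ⟨k + 1, ?_, by omega, ?_⟩
        · rw [hx, cword_succ]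
        · rw [htail, show k + (st.length + 1) = k + 1 + st.length from by omega,
            List.replicate_succ, List.cons_append]
      | shift hrel hδ =>
        rename_i st₂ p r' a b x
        obtain ⟨hb, hr⟩ : b = CR.r ∧ r' = true := by simpa [T1] using hδ
        subst hb; subst hr
        have hap : (a, p) = (CR.c, false) := hst _ List.mem_cons_self
        obtain ⟨ha, hp⟩ := Prod.mk.injEq .. ▸ hap
        have hp' : p = false := by simpa using hp
        have ha' : a = CR.c := by simpa using ha
        subst hp'
        obtain ⟨hx, htail⟩ := W1_pop tail ((CR.r, false) :: st₂) x hrest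
          (by
            intro pp hpp
            rcases List.mem_cons.1 hpp with rfl | hpp
            · rfl
            · have := hst pp (List.mem_cons_of_mem _ hpp)
              rw [this])
        subst hx
        refine ⟨0, rfl, by simp, ?_⟩
        simp [htail]
      | pop hrel hδ =>
        exact absurd hδ (by simp [T1])

/-- The unique accepting move sequence of `T1` on `cⁿr`. -/
def msW1 (n : ℕ) : List (Move CR Bool) :=
  List.replicate n (Move.push false CR.c false) ++
    Move.shift false CR.r true :: List.replicate n (Move.pop true false true)

lemma W1_accRuns (n : ℕ) (hn : 1 ≤ n) :
    AccRuns crOPM T1 (cword n) = {((false : Bool), msW1 n, (true : Bool))} := by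
  apply Set.eq_singleton_iff_unique_mem.2
  constructor
  · obtain ⟨pos, -, hexec⟩ := construct T1 n hn (fun _ => false) (fun _ => true)
      (fun k _ => by simp [T1]) (by simp [T1]) (fun k _ => by simp [T1])
    obtain ⟨k, hwk, hk1, hmseq⟩ := W1_run _ (cword n) [] hexec (by simp)
    have hkn : k = n := by
      have := congrArg List.length hwk
      simp at this
      omega
    subst hkn
    rw [hmseq] at hexec
    refine ⟨by simp [T1], by simp [T1], ?_⟩
    simpa [msW1] using hexec
  · rintro ⟨qI, ms, qF⟩ ⟨hI, hF, hex⟩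
    have hqI : qI = false := hI
    have hqF : qF = true := hF
    subst hqI; subst hqF
    obtain ⟨k, hwk, hk1, hmseq⟩ := W1_run ms (cword n) [] hex (by simp)
    have hkn : k = n := by
      have := congrArg List.length hwk
      simp at this
      omega
    subst hkn
    simp only [Prod.mk.injEq]
    refine ⟨trivial, ?_, trivial⟩
    simpa [msW1] using hmseq

lemma W1_behavior (n : ℕ) (hn : 1 ≤ n) :
    behavior crOPM W1 (cword n)
      = ⟨({anban n} : Language Bool), Set.finite_singleton _⟩ := by
  have hb : behavior crOPM W1 (cword n)
      = ∑ᶠ ρ ∈ AccRuns crOPM T1 (cword n),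
          ((ρ.2.1.map (moveWt W1)).prod : FinLang) := rfl
  rw [hb, W1_accRuns n hn, finsum_mem_singleton]
  have hmap : (msW1 n).map (moveWt W1) = List.replicate n aL ++ bL :: List.replicate n aL := by
    simp [msW1, moveWt, W1]
  rw [hmap]
  apply Subtype.ext
  rw [List.prod_append, List.prod_cons, List.prod_replicate]
  have hco : ((aL ^ n * (bL * aL ^ n) : FinLang) : Language Bool)
      = ({[false]} : Language Bool) ^ n * (({[true]} : Language Bool) * ({[false]} : Language Bool) ^ n) := by
    push_cast
    rfl
  rw [hco, lang_singleton_pow, lang_singleton_mul, lang_singleton_mul]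
  rfl

lemma partA : Regular crOPM S₁ := by
  refine ⟨W1, fun w _ => ?_⟩
  by_cases hc : 1 ≤ w.count CR.c ∧ w = List.replicate (w.count CR.c) CR.c ++ [CR.r]
  · have h1 := hc.1
    have hw : w = cword (w.count CR.c) := hc.2
    rw [hw, S₁_cword _ h1, W1_behavior _ h1]
  · have h0 : S₁ w = 0 := by rw [S₁, if_neg hc]
    have hAcc : AccRuns crOPM T1 w = ∅ := by
      ext ρ
      simp only [Set.mem_empty_iff_false, iff_false]
      obtain ⟨qI, ms, qF⟩ := ρ
      rintro ⟨hI, hF, hex⟩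
      have hqI : qI = false := hI
      have hqF : qF = true := hF
      subst hqI; subst hqF
      obtain ⟨k, hwk, hk1, -⟩ := W1_run ms w [] hex (by simp)
      refine hc ⟨?_, ?_⟩
      · rw [hwk, cword_count]
        simpa using hk1
      · rw [hwk, cword_count]
        rfl
    have hb : behavior crOPM W1 w
        = ∑ᶠ ρ ∈ AccRuns crOPM T1 w, ((ρ.2.1.map (moveWt W1)).prod : FinLang) := rfl
    rw [h0, hb, hAcc, finsum_mem_empty]

end PartA

section PartB

@[simp] lemma anban_length (n : ℕ) : (anban n).length = 2*n + 1 := by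
  simp [anban]
  omega

lemma anban_count (n : ℕ) : (anban n).count true = 1 := by
  simp [anban, List.count_replicate]

lemma anban_get_self (n : ℕ) : (anban n)[n]? = some true := by
  rw [anban, List.getElem?_append_right (by simp)]
  simp

lemma anban_get_ne (n t : ℕ) (h1 : t ≠ n) (h2 : t < 2*n + 1) : (anban n)[t]? = some false := by
  rcases lt_or_gt_of_ne h1 with h | h
  · rw [anban, List.getElem?_append_left (by simpa using h), List.getElem?_replicate, if_pos h]
  · rw [anban, List.getElem?_append_right (by simp; omega)]
    have hidx : t - (List.replicate n false).length = (t - n - 1) + 1 := by simp; omega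
    rw [hidx, List.getElem?_cons_succ, List.getElem?_replicate, if_pos (by omega)]

lemma word_pump (Aw V B : List Bool) (n d : ℕ) (hd : 1 ≤ d)
    (h1 : Aw ++ (V ++ B) = anban n)
    (h2 : Aw ++ (V ++ (V ++ B)) = anban (n + d)) : False := by
  have hlen1 : Aw.length + (V.length + B.length) = 2*n + 1 := by
    have := congrArg List.length h1
    simpa using this
  have hlen2 : Aw.length + (V.length + (V.length + B.length)) = 2*(n+d) + 1 := by
    have := congrArg List.length h2
    simpa using this
  have hV : V.length = 2*d := by omega
  have hc1 : Aw.count true + (V.count true + B.count true) = 1 := by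
    have := congrArg (List.count true) h1
    simpa [anban_count] using this
  have hc2 : Aw.count true + (V.count true + (V.count true + B.count true)) = 1 := by
    have := congrArg (List.count true) h2
    simpa [anban_count] using this
  have hVc : V.count true = 0 := by omega
  have hVf : ∀ k, k < V.length → V[k]? = some false := by
    intro k hk
    have hmem : V[k]'hk ∈ V := List.getElem_mem _
    have hne : V[k]'hk ≠ true := by
      intro h
      rw [List.count_eq_zero] at hVc
      exact hVc (h ▸ hmem)
    have hf : V[k]'hk = false := by
      cases hb : V[k]'hk
      · rfl
      · exact absurd hb hne
    rw [List.getElem?_eq_getElem hk, hf]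
  by_cases hA : n < Aw.length
  · have e1 : Aw[n]? = some true := by
      rw [← List.getElem?_append_left (l₂ := V ++ B) hA, h1, anban_get_self]
    have e2 : (anban (n+d))[n]? = some false := anban_get_ne _ _ (by omega) (by omega)
    rw [← h2, List.getElem?_append_left hA, e1] at e2
    simp at e2
  · push_neg at hA
    by_cases hB : n < Aw.length + 2*d
    · have e1 : V[n - Aw.length]? = some true := by
        rw [← anban_get_self n, ← h1, List.getElem?_append_right hA,
          List.getElem?_append_left (by omega)]
      rw [hVf _ (by omega)] at e1
      simp at e1
    · push_neg at hB
      have e1 : B[n - Aw.length - 2*d]? = some true := by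
        rw [← anban_get_self n, ← h1, List.getElem?_append_right hA,
          List.getElem?_append_right (by omega), hV]
      have e2 := anban_get_ne (n+d) (n + 2*d) (by omega) (by omega)
      rw [← h2, List.getElem?_append_right (by omega),
        List.getElem?_append_right (by omega),
        List.getElem?_append_right (by omega), hV] at e2
      rw [show n + 2*d - Aw.length - 2*d - 2*d = n - Aw.length - 2*d from by omega, e1] at e2
      simp at e2

lemma FinLang.mem_coe_list_prod (l : List FinLang) (x : List Bool) :
    x ∈ ((l.prod : FinLang) : Language Bool) ↔
      x ∈ (l.map (fun y : FinLang => (y : Language Bool))).prod := by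
  rw [show ((l.prod : FinLang) : Language Bool)
    = ((Subsemiring.subtype FinLang) l.prod) from rfl, map_list_prod]
  rfl

lemma partB : ¬ StrictlyRegular crOPM S₁ := by
  rintro ⟨W, hres, hS⟩
  haveI := W.fin
  set N := Fintype.card W.Q with hN
  set n := N * N + 1 with hn
  have hn1 : 1 ≤ n := by omega
  have hbn : behavior crOPM W (cword n)
      = ⟨({anban n} : Language Bool), Set.finite_singleton _⟩ := by
    rw [← hS _ (cword_mem_OPWords n hn1), S₁_cword n hn1]
  have hmem : anban n ∈ ((behavior crOPM W (cword n) : FinLang) : Language Bool) := by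
    rw [hbn]; exact rfl
  obtain ⟨ρ, hρ, hwt⟩ := (mem_behavior_iff W n hn1 _).1 hmem
  obtain ⟨qI, ms, qF⟩ := ρ
  obtain ⟨hI, hF, hex⟩ := hρ
  obtain ⟨qs, ss, pos, hq0, hssn, hpush, hshift, hpop, hposonly, hmseq, -⟩ :=
    decomp W.toOPA n hn1 hex
  rw [hmseq] at hwt
  have hposwt : (pos.map (moveWt W)).prod = 1 := by
    apply List.prod_eq_one
    intro x hx
    obtain ⟨mv, hm, rfl⟩ := List.mem_map.1 hx
    obtain ⟨a, b, c, rfl, hmem'⟩ := hposonly mv hm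
    exact hres _ hmem'
  rw [List.map_append, List.prod_append, List.map_cons, List.prod_cons, hposwt, mul_one] at hwt
  have hwt2 : anban n ∈
      ((((pushMoves W.toOPA qs n).map (moveWt W)).prod : FinLang) : Language Bool)
        * ((moveWt W (Move.shift (qs n) CR.r (ss 0)) : FinLang) : Language Bool) := hwt
  obtain ⟨u, hu, s, hs, hcat⟩ := Language.mem_mul.1 hwt2
  obtain ⟨ws, hws, hjoin⟩ := mem_list_prod.1 ((FinLang.mem_coe_list_prod _ _).1 hu)
  have h2 := List.forall₂_iff_get.1 hws
  have hwslen : ws.length = n := by simpa [pushMoves] using h2.1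
  have hwmem : ∀ k, (hk : k < n) →
      ws[k]'(by omega) ∈ ((W.wtpush (qs k, CR.c, qs (k+1)) : FinLang) : Language Bool) := by
    intro k hk
    have := h2.2 k (by omega) (by simpa [pushMoves] using hk)
    simpa [pushMoves, moveWt, List.get_eq_getElem] using this
  have hsmem : s ∈ ((W.wtshift (qs n, CR.r, ss 0) : FinLang) : Language Bool) := hs
  -- pigeonhole
  have hcard : Fintype.card (W.Q × W.Q) < Fintype.card (Fin (n+1)) := by
    rw [Fintype.card_prod, Fintype.card_fin, ← hN]
    omega
  obtain ⟨x, y, hxy, hfxy⟩ := Fintype.exists_ne_map_eq_of_card_lt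
    (fun k : Fin (n+1) => (qs (k : ℕ), ss (n - (k : ℕ)))) hcard
  have hij : ∃ i j : ℕ, i < j ∧ j ≤ n ∧ qs i = qs j ∧ ss (n - i) = ss (n - j) := by
    rcases Nat.lt_or_ge (x : ℕ) (y : ℕ) with h | h
    · exact ⟨x, y, h, by have := y.isLt; omega,
        congrArg Prod.fst hfxy, congrArg Prod.snd hfxy⟩
    · have hne : (y : ℕ) < (x : ℕ) := by
        rcases Nat.lt_or_ge (y : ℕ) (x : ℕ) with h' | h'
        · exact h'
        · exact absurd (Fin.ext (by omega)) hxy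
      exact ⟨y, x, hne, by have := x.isLt; omega,
        (congrArg Prod.fst hfxy).symm, (congrArg Prod.snd hfxy).symm⟩
  obtain ⟨i, j, hij2, hjn, hqij, hsij⟩ := hij
  set d := j - i with hd
  have hd1 : 1 ≤ d := by omega
  set m := n + d with hm
  have hm1 : 1 ≤ m := by omega
  set qs' : ℕ → W.Q := fun k => if k < j then qs k else qs (k - d) with hqs'
  set ss' : ℕ → W.Q := fun k => if k < n - i then ss k else ss (k - d) with hss'
  have hq'j : qs' j = qs j := by
    simp only [hqs', if_neg (lt_irrefl j)]
    rw [show j - d = i from by omega, hqij]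
  have hq'0 : qs' 0 = qs 0 := by simp [hqs', show 0 < j from by omega]
  have hss'm : ss' m = ss n := by
    simp [hss', show ¬ m < n - i from by omega, show m - d = n from by omega]
  have hpush' : ∀ k, k < m → (qs' k, CR.c, qs' (k+1)) ∈ W.δpush := by
    intro k hk
    by_cases h1 : k < j
    · have hk' : qs' k = qs k := by simp [hqs', h1]
      by_cases hk2 : k + 1 < j
      · have e2 : qs' (k+1) = qs (k+1) := by simp [hqs', hk2]
        rw [hk', e2]; exact hpush k (by omega)
      · have h3 : k + 1 = j := by omega
        have e2 : qs' (k+1) = qs (k+1) := by rw [h3, hq'j]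
        rw [hk', e2]; exact hpush k (by omega)
    · have e1 : qs' k = qs (k - d) := by simp [hqs', h1]
      have e2 : qs' (k+1) = qs (k + 1 - d) := by
        simp [hqs', show ¬ k + 1 < j from by omega]
      rw [e1, e2, show k + 1 - d = (k - d) + 1 from by omega]
      exact hpush (k - d) (by omega)
  have hshift' : (qs' m, CR.r, ss' 0) ∈ W.δshift := by
    rw [show qs' m = qs n from by
        simp [hqs', show ¬ m < j from by omega, show m - d = n from by omega],
      show ss' 0 = ss 0 from by simp [hss', show 0 < n - i from by omega]]
    exact hshift
  have hpop' : ∀ k, k < m → (ss' k, qs' (m-1-k), ss' (k+1)) ∈ W.δpop := by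
    intro k hk
    by_cases h1 : k < n - i
    · have e1 : ss' k = ss k := by simp [hss', h1]
      have e3 : qs' (m-1-k) = qs (n-1-k) := by
        simp [hqs', show ¬ (m-1-k) < j from by omega, show m-1-k-d = n-1-k from by omega]
      by_cases hk2 : k + 1 < n - i
      · have e2 : ss' (k+1) = ss (k+1) := by simp [hss', hk2]
        rw [e1, e2, e3]; exact hpop k (by omega)
      · have h3 : k + 1 = n - i := by omega
        have e2 : ss' (k+1) = ss (k+1) := by
          simp only [hss', if_neg (by omega : ¬ k + 1 < n - i)]
          rw [show k + 1 - d = n - j from by omega, ← hsij, h3]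
        rw [e1, e2, e3]; exact hpop k (by omega)
    · have e1 : ss' k = ss (k - d) := by simp [hss', h1]
      have e2 : ss' (k+1) = ss (k + 1 - d) := by
        simp [hss', show ¬ k + 1 < n - i from by omega]
      have e3 : qs' (m-1-k) = qs (m-1-k) := by
        simp [hqs', show m-1-k < j from by omega]
      rw [e1, e2, e3, show m-1-k = n-1-(k-d) from by omega,
        show k + 1 - d = (k - d) + 1 from by omega]
      exact hpop (k - d) (by omega)
  obtain ⟨pos', hpos'only, hexec'⟩ := construct W.toOPA m hm1 qs' ss' hpush' hshift' hpop'
  have hρ' : ((qs' 0), (pushMoves W.toOPA qs' m ++ Move.shift (qs' m) CR.r (ss' 0) :: pos'),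
      (ss' m)) ∈ AccRuns crOPM W.toOPA (cword m) := by
    refine ⟨?_, ?_, hexec'⟩
    · rw [hq'0, hq0]; exact hI
    · rw [hss'm, hssn]; exact hF
  -- the pumped word
  set ws' : List (List Bool) := ws.take j ++ ws.drop i with hws'
  have hws'len : ws'.length = m := by
    simp [hws', hwslen]
    omega
  have hmemk : ∀ k, (hk : k < m) →
      ws'[k]'(by omega) ∈ ((W.wtpush (qs' k, CR.c, qs' (k+1)) : FinLang) : Language Bool) := by
    intro k hk
    by_cases h1 : k < j
    · have hgete : ws'[k]'(by omega) = ws[k]'(by omega) := by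
        simp only [hws']
        rw [List.getElem_append_left (by simp [hwslen]; omega)]
        rw [List.getElem_take]
      have hk' : qs' k = qs k := by simp [hqs', h1]
      by_cases hk2 : k + 1 < j
      · have e2 : qs' (k+1) = qs (k+1) := by simp [hqs', hk2]
        rw [hgete, hk', e2]; exact hwmem k (by omega)
      · have h3 : k + 1 = j := by omega
        have e2 : qs' (k+1) = qs (k+1) := by rw [h3, hq'j]
        rw [hgete, hk', e2]; exact hwmem k (by omega)
    · have hgete : ws'[k]'(by omega) = ws[k - d]'(by omega) := by
        simp only [hws']
        rw [List.getElem_append_right (by simp [hwslen]; omega)]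
        rw [List.getElem_drop]
        congr 1
        simp [hwslen]
        omega
      have e1 : qs' k = qs (k - d) := by simp [hqs', h1]
      have e2 : qs' (k+1) = qs (k + 1 - d) := by
        simp [hqs', show ¬ k + 1 < j from by omega]
      rw [hgete, e1, e2, show k + 1 - d = (k - d) + 1 from by omega]
      exact hwmem (k - d) (by omega)
  have hJ' : ws'.flatten ++ s ∈ ((behavior crOPM W (cword m) : FinLang) : Language Bool) := by
    refine (mem_behavior_iff W m hm1 _).2 ⟨_, hρ', ?_⟩
    have hposwt' : (pos'.map (moveWt W)).prod = 1 := by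
      apply List.prod_eq_one
      intro x hx
      obtain ⟨mv, hmv, rfl⟩ := List.mem_map.1 hx
      obtain ⟨a, b, c, rfl, hmem'⟩ := hpos'only mv hmv
      exact hres _ hmem'
    show ws'.flatten ++ s ∈
      ((((pushMoves W.toOPA qs' m ++ Move.shift (qs' m) CR.r (ss' 0) :: pos').map
        (moveWt W)).prod : FinLang) : Language Bool)
    rw [List.map_append, List.prod_append, List.map_cons, List.prod_cons, hposwt', mul_one]
    have hq'm : qs' m = qs n := by
      simp [hqs', show ¬ m < j from by omega, show m - d = n from by omega]
    have hs'0 : ss' 0 = ss 0 := by simp [hss', show 0 < n - i from by omega]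
    refine Language.mem_mul.2 ⟨ws'.flatten, ?_, s, by rw [hq'm, hs'0]; exact hsmem, rfl⟩
    refine (FinLang.mem_coe_list_prod _ _).2 (mem_list_prod.2 ⟨ws', ?_, rfl⟩)
    rw [List.forall₂_iff_get]
    refine ⟨by simpa [pushMoves] using hws'len, ?_⟩
    intro k h1 h2
    have hkm : k < m := by omega
    have := hmemk k hkm
    simpa [pushMoves, moveWt, List.get_eq_getElem] using this
  have hbm : behavior crOPM W (cword m)
      = ⟨({anban m} : Language Bool), Set.finite_singleton _⟩ := by
    rw [← hS _ (cword_mem_OPWords m hm1), S₁_cword m hm1]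
  rw [hbm] at hJ'
  have hJeq : ws'.flatten ++ s = anban m := hJ'
  -- split ws into three parts
  have hdropsplit : ws.drop j = (ws.drop i).drop (j - i) := by
    rw [List.drop_drop]
    congr 1
    omega
  have hsplit1 : ws = ws.take i ++ ((ws.drop i).take (j - i) ++ ws.drop j) := by
    rw [hdropsplit, List.take_append_drop, List.take_append_drop]
  have hsplit2 : ws.take j = ws.take i ++ (ws.drop i).take (j - i) := by
    have htadd := List.take_add (l := ws) (i := i) (j := j - i)
    rwa [show i + (j - i) = j from by omega] at htadd
  have h1' : (ws.take i).flatten ++ (((ws.drop i).take (j - i)).flatten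
      ++ ((ws.drop j).flatten ++ s)) = anban n := by
    rw [← hcat, ← hjoin]
    conv_rhs => rw [hsplit1]
    simp [List.flatten_append, List.append_assoc]
  have hdi : ws.drop i = (ws.drop i).take (j - i) ++ ws.drop j := by
    rw [hdropsplit]
    exact (List.take_append_drop _ _).symm
  have e1 : (ws.take j).flatten
      = (ws.take i).flatten ++ ((ws.drop i).take (j - i)).flatten := by
    rw [hsplit2, List.flatten_append]
  have e2 : (ws.drop i).flatten
      = ((ws.drop i).take (j - i)).flatten ++ (ws.drop j).flatten := by
    conv_lhs => rw [hdi]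
    rw [List.flatten_append]
  have h2' : (ws.take i).flatten ++ (((ws.drop i).take (j - i)).flatten
      ++ (((ws.drop i).take (j - i)).flatten ++ ((ws.drop j).flatten ++ s))) = anban (n + d) := by
    rw [← hm, ← hJeq, hws', List.flatten_append, e1, e2]
    simp [List.append_assoc]
  exact word_pump _ _ _ n d hd1 h1' h2'

end PartB

/-- The series `S₁` is regular but not strictly regular. -/
theorem regular_not_strictlyRegular :
    Regular crOPM S₁ ∧ ¬ StrictlyRegular crOPM S₁ := by
  exact ⟨partA, partB⟩
end WOP
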